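/- arXiv:1611.08019 — 9 statements merged into one kernel-verified Lean document; each statement's English description precedes it below -/
import Mathlib

section
/- For all integers n ≥ 4, the sequence satisfies T_n = (a-1)T_{n-1} + (a+b-1)T_{n-2} + (a+b)T_{n-3} + (a+b)T_{n-4} + ... + (a+b)T_1 + (a+b+1)T_0. -/
/-- For all n ≥ 4, T n = (a-1)T_{n-1} + (a+b-1)T_{n-2} + (a+b)(T_{n-3}+⋯+T_1) + (a+b+1)T_0. -/
theorem stmt_0 (a b : ℤ) (hb1 : -a + 1 ≤ b) (hb2 : b ≤ -2)
    (T : ℕ → ℤ) (hT0 : T 0 = 1) (hT1 : T 1 = a) (hT2 : T 2 = a ^ 2 + b)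
    (hrec : ∀ n : ℕ, T (n + 3) = a * T (n + 2) + b * T (n + 1) + T n) :
    ∀ n : ℕ, 4 ≤ n →
      T n = (a - 1) * T (n - 1) + (a + b - 1) * T (n - 2) +
        (∑ i ∈ Finset.Icc 1 (n - 3), (a + b) * T i) + (a + b + 1) * T 0 := by
  have key : ∀ m : ℕ, T (m + 4) = (a - 1) * T (m + 3) + (a + b - 1) * T (m + 2) +
      (∑ i ∈ Finset.Icc 1 (m + 1), (a + b) * T i) + (a + b + 1) * T 0 := by
    intro m
    induction m with
    | zero =>
      have h0 := hrec 0
      have h1 := hrec 1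
      simp only [Finset.Icc_self, Finset.sum_singleton]
      rw [hT0, hT1, hT2] at *
      simp only [show (0:ℕ)+3 = 3 from rfl, show (1:ℕ)+3 = 4 from rfl,
        show (1:ℕ)+2 = 3 from rfl, show (0:ℕ)+2 = 2 from rfl, show (0:ℕ)+1 = 1 from rfl,
        show (0:ℕ)+4 = 4 from rfl] at *
      rw [h1, h0] at *
      ring
    | succ k ih =>
      have hr := hrec (k + 2)
      have hr' := hrec k
      have hsum : (∑ i ∈ Finset.Icc 1 (k + 2), (a + b) * T i)
          = (∑ i ∈ Finset.Icc 1 (k + 1), (a + b) * T i) + (a + b) * T (k + 2) := by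
        rw [← Finset.sum_Icc_succ_top (by omega : 1 ≤ k + 2)]
      have e1 : k + 1 + 4 = k + 2 + 3 := by ring
      have e2 : k + 1 + 3 = k + 2 + 2 := by ring
      have e3 : k + 1 + 2 = k + 2 + 1 := by ring
      rw [e1, e2, e3, hr, hsum]
      have hr2 := hrec (k + 1)
      rw [show k + 1 + 3 = k + 2 + 2 from by ring, show k+1+2 = k+2+1 from by ring] at hr2
      rw [show k + 4 = k + 2 + 2 from by ring, show k + 3 = k + 2 + 1 from by ring] at ih
      linarith [ih]
  intro n hn
  obtain ⟨m, rfl⟩ : ∃ m, n = m + 4 := ⟨n - 4, by omega⟩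
  have h1 : m + 4 - 1 = m + 3 := by omega
  have h2 : m + 4 - 2 = m + 2 := by omega
  have h3 : m + 4 - 3 = m + 1 := by omega
  rw [h1, h2, h3]
  exact key m
end

section
/- Every nonnegative integer n can be expressed as n = Σ_{i=0}^{N} ℓ_i T_i with digits ℓ_i ∈ {0, ..., a-1} satisfying the lexicographic condition ℓ_j ℓ_{j-1} ⋯ ℓ_{j-k} ≤_lex (a-1)(a+b-1)(a+b)⋯(a+b) for all j ≥ k ≥ 0. -/
open Finset

/-- The admissible digit pattern `(a-1)(a+b-1)(a+b)(a+b)⋯`. -/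
def pat (a b : ℤ) : ℕ → ℤ := fun t => if t = 0 then a - 1 else if t = 1 then a + b - 1 else a + b

lemma key_lemma (a b : ℤ) (T : ℕ → ℤ) (hb1 : -a + 1 ≤ b) (hb2 : b ≤ -2)
    (hT0 : T 0 = 1) (hT1 : T 1 = a) (hT2 : T 2 = a ^ 2 + b)
    (hrec : ∀ n : ℕ, T (n + 3) = a * T (n + 2) + b * T (n + 1) + T n) :
    ∀ n, 0 < T n ∧ T n < T (n + 1) := by
  have ha : 3 ≤ a := by linarith
  have main : ∀ n, 0 < T n ∧ T n < T (n+1) ∧ T (n+1) < T (n+2) := by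
    intro n
    induction n with
    | zero =>
      refine ⟨by rw [hT0]; norm_num, by rw [hT0, hT1]; linarith, ?_⟩
      rw [hT1, hT2]; nlinarith [sq_nonneg (a-1)]
    | succ n ih =>
      obtain ⟨h0, h1, h2⟩ := ih
      refine ⟨by linarith, h2, ?_⟩
      have hr := hrec n
      nlinarith [mul_pos (show (0:ℤ) < a - 1 by linarith) (show 0 < T (n+2) - T (n+1) by linarith),
        mul_nonneg (show (0:ℤ) ≤ b + a - 1 by linarith) (show 0 ≤ T (n+1) by linarith)]
  exact fun n => ⟨(main n).1, (main n).2.1⟩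

lemma Tstep_lemma (a b : ℤ) (T : ℕ → ℤ) (hb2 : b ≤ -2) (hT1 : T 1 = a) (hT2 : T 2 = a ^ 2 + b)
    (hrec : ∀ n : ℕ, T (n + 3) = a * T (n + 2) + b * T (n + 1) + T n)
    (hkey : ∀ n, 0 < T n ∧ T n < T (n + 1)) (hT0 : T 0 = 1) :
    ∀ j, T (j + 1) ≤ a * T j := by
  intro j
  match j with
  | 0 => rw [hT0, hT1]; linarith
  | 1 => rw [hT1, hT2]; nlinarith
  | (n+2) =>
    have hr := hrec n
    have h1 := (hkey n).1
    have h2 := (hkey n).2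
    have h3 := (hkey (n+1)).1
    nlinarith [mul_le_mul_of_nonneg_right (show b ≤ -1 by linarith) (le_of_lt h3)]

lemma C1_lemma (a b : ℤ) (T : ℕ → ℤ) (hb1 : -a + 1 ≤ b) (hb2 : b ≤ -2) (hT0 : T 0 = 1)
    (hT1 : T 1 = a) (hT2 : T 2 = a ^ 2 + b)
    (hrec : ∀ n : ℕ, T (n + 3) = a * T (n + 2) + b * T (n + 1) + T n)
    (hkey : ∀ n, 0 < T n ∧ T n < T (n + 1)) :
    ∀ j, T (j + 2) ≤ (a - 1) * T (j + 1) + (a + b) * T j := by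
  intro j
  match j with
  | 0 => rw [hT0, hT1, hT2]; nlinarith
  | 1 =>
    have hr := hrec 0
    rw [hT0, hT1, hT2] at *
    nlinarith
  | (n+2) =>
    have hr1 := hrec (n+1)
    have hr0 := hrec n
    have h1 := (hkey n).1
    have h2 := (hkey n).2
    have h3 := (hkey (n+1)).2
    nlinarith [mul_le_mul_of_nonneg_right (show b + 1 ≤ -1 by linarith) (show (0:ℤ) ≤ T (n+1) by linarith)]

lemma CC_lemma (a b : ℤ) (T : ℕ → ℤ)
    (hrec : ∀ n : ℕ, T (n + 3) = a * T (n + 2) + b * T (n + 1) + T n)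
    (hC1 : ∀ j, T (j + 2) ≤ (a - 1) * T (j + 1) + (a + b) * T j) :
    ∀ t j, 1 ≤ t → t ≤ j →
      T (j + 1) ≤ (∑ s ∈ range t, pat a b s * T (j - s)) + (pat a b t + 1) * T (j - t) := by
  intro t
  induction t with
  | zero => intro j h; omega
  | succ t ih =>
    intro j _ hj
    obtain ⟨m, rfl⟩ : ∃ m, j = m + 1 := ⟨j - 1, by omega⟩
    rcases Nat.eq_zero_or_pos t with rfl | ht
    · simp only [Finset.sum_range_one, pat]
      norm_num
      linarith [hC1 m]
    · rcases Nat.lt_or_ge t 2 with ht2 | ht2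
      · have : t = 1 := by omega
        subst this
        obtain ⟨r, rfl⟩ : ∃ r, m = r + 1 := ⟨m - 1, by omega⟩
        have IH := ih (r+1) (by omega) (by omega)
        simp only [Finset.sum_range_succ, Finset.sum_range_zero, pat] at IH ⊢
        norm_num at IH ⊢
        have hr := hrec r
        have e1 : r + 1 + 1 - 2 = r := by omega
        rw [e1]
        linarith
      · have hmt : t ≤ m := by omega
        obtain ⟨r, rfl⟩ : ∃ r, m = r + 1 := ⟨m - 1, by omega⟩
        have IH := ih (r+1) (by omega) (by omega)
        have hr := hrec r
        rw [Finset.sum_range_succ']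
        have hsum : ∑ s ∈ range t, pat a b (s+1) * T (r+1+1-(s+1))
            = (∑ s ∈ range t, pat a b s * T (r+1-s)) + (b * T (r+1) + T r) := by
          have hcongr : ∀ s ∈ range t, pat a b (s+1) * T (r+1+1-(s+1))
              = pat a b s * T (r+1-s) + (pat a b (s+1) - pat a b s) * T (r+1-s) := by
            intro s _
            have e : r+1+1-(s+1) = r+1-s := by omega
            rw [e]; ring
          rw [Finset.sum_congr rfl hcongr, Finset.sum_add_distrib]
          congr 1
          rw [← Finset.sum_subset (Finset.range_subset_range.mpr ht2)]
          · simp only [Finset.sum_range_succ, Finset.sum_range_zero, pat]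
            norm_num
          · intro x hx hx2
            have h0 : x ≠ 0 := by simp at hx2; omega
            have h1 : x ≠ 1 := by simp at hx2; omega
            simp [pat, h0, h1]
        rw [hsum]
        have hpt : pat a b (t+1) = pat a b t := by
          simp [pat, show t + 1 ≠ 0 by omega, show t + 1 ≠ 1 by omega,
            show t ≠ 0 by omega, show t ≠ 1 by omega]
        have e2 : r + 1 + 1 - (t+1) = r + 1 - t := by omega
        have e3 : r + 1 + 1 - 0 = r + 2 := by omega
        rw [hpt, e2, e3]
        have hp0 : pat a b 0 = a - 1 := by simp [pat]
        rw [hp0]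
        linarith

lemma greedy_lemma (a : ℤ) (T : ℕ → ℤ) (ha : 3 ≤ a)
    (hkey : ∀ n, 0 < T n ∧ T n < T (n + 1)) (hT0 : T 0 = 1)
    (hstep : ∀ j, T (j + 1) ≤ a * T j) :
    ∀ m : ℕ, ∀ n : ℤ, 0 ≤ n → n < T m →
      ∃ ℓ : ℕ → ℤ, (∀ i, 0 ≤ ℓ i ∧ ℓ i ≤ a - 1) ∧ (∀ i, m ≤ i → ℓ i = 0) ∧
        n = ∑ i ∈ range m, ℓ i * T i ∧
        (∀ j, ∑ i ∈ range (j + 1), ℓ i * T i < T (j + 1)) := by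
  have hmono : StrictMono T := strictMono_nat_of_lt_succ (fun n => (hkey n).2)
  intro m
  induction m with
  | zero =>
    intro n hn hlt
    rw [hT0] at hlt
    have : n = 0 := by omega
    subst this
    exact ⟨fun _ => 0, fun i => ⟨le_refl 0, by show (0:ℤ) ≤ a - 1; linarith⟩, by simp, by simp,
      fun j => by simpa using (hkey (j+1)).1⟩
  | succ m ih =>
    intro n hn hlt
    have hTm := (hkey m).1
    set d := n / T m with hd
    set r := n % T m with hrr
    have hr0 : 0 ≤ r := Int.emod_nonneg n (ne_of_gt hTm)
    have hr1 : r < T m := Int.emod_lt_of_pos n hTm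
    have hde : n = d * T m + r := by rw [hd, hrr]; linarith [Int.mul_ediv_add_emod n (T m)]
    have hd0 : 0 ≤ d := Int.ediv_nonneg hn (le_of_lt hTm)
    have hda : d ≤ a - 1 := by
      by_contra h
      push_neg at h
      have : a ≤ d := by omega
      have : a * T m ≤ d * T m := mul_le_mul_of_nonneg_right this (le_of_lt hTm)
      have h2 : n < a * T m := lt_of_lt_of_le hlt (hstep m)
      linarith
    obtain ⟨ℓ, hb, hsupp, hsum, hpart⟩ := ih r hr0 hr1
    refine ⟨fun i => if i = m then d else ℓ i, ?_, ?_, ?_, ?_⟩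
    · intro i
      by_cases h : i = m
      · simp [h, hd0, hda]
      · simp [h, hb i]
    · intro i hi
      have : i ≠ m := by omega
      simp [this, hsupp i (by omega)]
    · rw [Finset.sum_range_succ]
      have : ∀ i ∈ range m, (if i = m then d else ℓ i) * T i = ℓ i * T i := by
        intro i hi
        simp at hi
        simp [show i ≠ m by omega]
      rw [Finset.sum_congr rfl this]; beta_reduce; rw [if_pos rfl]
      linarith
    · intro j
      rcases Nat.lt_or_ge j m with hjm | hjm
      · have : ∀ i ∈ range (j+1), (if i = m then d else ℓ i) * T i = ℓ i * T i := by
          intro i hi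
          simp at hi
          simp [show i ≠ m by omega]
        rw [Finset.sum_congr rfl this]
        exact hpart j
      · have hsub : range (m+1) ⊆ range (j+1) := Finset.range_subset_range.mpr (by omega)
        have hz : ∀ x ∈ range (j+1), x ∉ range (m+1) →
            (if x = m then d else ℓ x) * T x = 0 := by
          intro x hx hx2
          simp at hx2
          simp [show x ≠ m by omega, hsupp x (by omega)]
        rw [← Finset.sum_subset hsub hz]
        have hsum1 : ∑ i ∈ range (m+1), (if i = m then d else ℓ i) * T i = n := by
          rw [Finset.sum_range_succ]
          have : ∀ i ∈ range m, (if i = m then d else ℓ i) * T i = ℓ i * T i := by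
            intro i hi
            simp at hi
            simp [show i ≠ m by omega]
          rw [Finset.sum_congr rfl this]; beta_reduce; rw [if_pos rfl]
          linarith
        rw [hsum1]
        calc n < T (m+1) := hlt
        _ ≤ T (j+1) := hmono.le_iff_le.mpr (by omega)

lemma sum_lower_lemma (f : ℕ → ℤ) (hf : ∀ i, 0 ≤ f i) (t j : ℕ) (h : t ≤ j) :
    ∑ s ∈ range (t+1), f (j - s) ≤ ∑ i ∈ range (j+1), f i := by
  have hinj : ∀ x ∈ range (t+1), ∀ y ∈ range (t+1), j - x = j - y → x = y := by
    intro x hx y hy hxy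
    simp only [mem_range] at hx hy
    omega
  rw [← Finset.sum_image hinj]
  apply Finset.sum_le_sum_of_subset_of_nonneg
  · intro x hx
    simp only [mem_image, mem_range] at hx ⊢
    obtain ⟨s, hs, rfl⟩ := hx
    omega
  · intro i _ _
    exact hf i

/-- Every nonnegative integer has a greedy representation in base (T n) with
admissible (lexicographically bounded) digits. The pattern is
(a-1)(a+b-1)(a+b)(a+b)⋯ . -/
theorem stmt_2 (a b : ℤ) (hb1 : -a + 1 ≤ b) (hb2 : b ≤ -2)
    (T : ℕ → ℤ) (hT0 : T 0 = 1) (hT1 : T 1 = a) (hT2 : T 2 = a ^ 2 + b)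
    (hrec : ∀ n : ℕ, T (n + 3) = a * T (n + 2) + b * T (n + 1) + T n) :
    ∀ n : ℤ, 0 ≤ n → ∃ (N : ℕ) (ℓ : ℕ → ℤ),
      (∀ i, 0 ≤ ℓ i ∧ ℓ i ≤ a - 1) ∧
      n = ∑ i ∈ Finset.range (N + 1), ℓ i * T i ∧
      (∀ j k : ℕ, k ≤ j →
        -- the word ℓ_j ℓ_{j-1} ⋯ ℓ_{j-k} is lexicographically at most the word
        -- p_0 p_1 ⋯ p_k where p_0 = a-1, p_1 = a+b-1, p_t = a+b for t ≥ 2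
        (let p : ℕ → ℤ := fun t => if t = 0 then a - 1 else if t = 1 then a + b - 1 else a + b
         (∀ t : ℕ, t ≤ k → ℓ (j - t) = p t) ∨
         (∃ t : ℕ, t ≤ k ∧ (∀ s : ℕ, s < t → ℓ (j - s) = p s) ∧ ℓ (j - t) < p t))) := by
  classical
  have ha : 3 ≤ a := by linarith
  have hkey := key_lemma a b T hb1 hb2 hT0 hT1 hT2 hrec
  have hstep := Tstep_lemma a b T hb2 hT1 hT2 hrec hkey hT0
  have hC1 := C1_lemma a b T hb1 hb2 hT0 hT1 hT2 hrec hkey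
  have hCC := CC_lemma a b T hrec hC1
  have hTpos : ∀ n, 0 < T n := fun n => (hkey n).1
  have hTlin : ∀ k : ℕ, (k : ℤ) + 1 ≤ T k := by
    intro k
    induction k with
    | zero => rw [hT0]; norm_num
    | succ k ih =>
      have := (hkey k).2
      push_cast
      linarith
  intro n hn
  set m : ℕ := n.toNat + 1 with hm
  have hnm : n < T m := by
    have h1 := hTlin m
    have : (m : ℤ) = n + 1 := by rw [hm]; push_cast; omega
    linarith
  obtain ⟨ℓ, hb, hsupp, hsum, hpart⟩ := greedy_lemma a T ha hkey hT0 hstep m n hn hnm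
  refine ⟨n.toNat, ℓ, hb, hsum, ?_⟩
  intro j k hk
  show (∀ t : ℕ, t ≤ k → ℓ (j - t) = pat a b t) ∨
    (∃ t : ℕ, t ≤ k ∧ (∀ s : ℕ, s < t → ℓ (j - s) = pat a b s) ∧ ℓ (j - t) < pat a b t)
  by_cases hall : ∀ t : ℕ, t ≤ k → ℓ (j - t) = pat a b t
  · exact Or.inl hall
  · right
    push_neg at hall
    obtain ⟨t₀, ht₀k, ht₀⟩ := hall
    have hex : ∃ t, ℓ (j - t) ≠ pat a b t := ⟨t₀, ht₀⟩
    set t := Nat.find hex with htdef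
    have htspec : ℓ (j - t) ≠ pat a b t := Nat.find_spec hex
    have htmin : ∀ s, s < t → ℓ (j - s) = pat a b s := fun s hs =>
      not_not.mp (Nat.find_min hex hs)
    have htk : t ≤ k := le_trans (Nat.find_min' hex ht₀) ht₀k
    refine ⟨t, htk, htmin, ?_⟩
    have htj : t ≤ j := le_trans htk hk
    have hle : ℓ (j - t) ≤ pat a b t := by
      rcases Nat.eq_zero_or_pos t with h0 | h1
      · rw [h0]
        have := (hb (j - 0)).2
        simpa [pat] using this
      · have hC := hCC t j h1 htj
        have hlow : (∑ s ∈ range t, pat a b s * T (j - s)) + ℓ (j - t) * T (j - t)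
            ≤ ∑ i ∈ range (j+1), ℓ i * T i := by
          have h1' : ∑ s ∈ range (t+1), ℓ (j - s) * T (j - s) ≤ ∑ i ∈ range (j+1), ℓ i * T i :=
            sum_lower_lemma (fun i => ℓ i * T i)
              (fun i => mul_nonneg (hb i).1 (hTpos i).le) t j htj
          rw [Finset.sum_range_succ] at h1'
          have : ∀ s ∈ range t, ℓ (j - s) * T (j - s) = pat a b s * T (j - s) := by
            intro s hs
            simp only [mem_range] at hs
            rw [htmin s hs]
          rw [Finset.sum_congr rfl this] at h1'
          exact h1'
        have hp := hpart j
        have hstrict : ℓ (j - t) * T (j - t) < (pat a b t + 1) * T (j - t) := by linarith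
        have := lt_of_mul_lt_mul_right hstrict (hTpos (j - t)).le
        linarith
    exact lt_of_le_of_ne hle htspec
end

section
/- The polynomial P_{a,b}(x) = x^3 - a x^2 - b x - 1 has a real root β > 1, and all other (complex) roots of P_{a,b} have modulus strictly less than 1; i.e., β is a Pisot number. -/
/-- The polynomial x³ - a x² - b x - 1 has a real root β > 1 and all its other
complex roots have modulus < 1 (β is a Pisot number). -/
theorem stmt_3 (a b : ℤ) (hb1 : -a + 1 ≤ b) (hb2 : b ≤ -2) :
    ∃ β : ℝ, 1 < β ∧ β ^ 3 - a * β ^ 2 - b * β - 1 = 0 ∧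
      ∀ z : ℂ, z ^ 3 - a * z ^ 2 - b * z - 1 = 0 → z ≠ (β : ℂ) → ‖z‖ < 1 := by
  have ha : (3 : ℤ) ≤ a := by omega
  have haR : (3 : ℝ) ≤ (a : ℝ) := by exact_mod_cast ha
  have hbR : (b : ℝ) ≤ -2 := by exact_mod_cast hb2
  have hbR1 : -(a : ℝ) + 1 ≤ (b : ℝ) := by exact_mod_cast hb1
  set f : ℝ → ℝ := fun x => x ^ 3 - a * x ^ 2 - b * x - 1 with hf
  have hcont : ContinuousOn f (Set.Icc 1 ((a : ℝ) - b + 1)) := by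
    apply Continuous.continuousOn; fun_prop
  have hT1 : (1 : ℝ) ≤ (a : ℝ) - b + 1 := by linarith
  have hf1 : f 1 < 0 := by simp only [hf]; nlinarith
  have hfT : 0 ≤ f ((a : ℝ) - b + 1) := by simp only [hf]; nlinarith
  have hmem : (0 : ℝ) ∈ Set.Icc (f 1) (f ((a : ℝ) - b + 1)) := ⟨le_of_lt hf1, hfT⟩
  obtain ⟨β, hβmem, hβroot⟩ := intermediate_value_Icc hT1 hcont hmem
  have hβ1 : 1 < β := by
    rcases lt_or_eq_of_le hβmem.1 with h | h
    · exact h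
    · exfalso; rw [← h] at hβroot; linarith
  have hroot : β ^ 3 - a * β ^ 2 - b * β - 1 = 0 := hβroot
  refine ⟨β, hβ1, hroot, ?_⟩
  set p : ℝ := β - a with hp
  set q : ℝ := β ^ 2 - a * β - b with hq
  have hqβ : q * β = 1 := by simp only [hq]; nlinarith [hroot]
  have hq0 : 0 < q := by nlinarith
  have hqlt : q < 1 := by nlinarith
  have hQ1 : 0 < 1 + p + q := by
    have key : (1 - β) * (1 + p + q) = -(a : ℝ) - b := by
      simp only [hp, hq]; linear_combination -hroot
    nlinarith
  have hQ2 : 0 < 1 - p + q := by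
    have key : (-1 - β) * (1 - p + q) = -2 - a + b := by
      simp only [hp, hq]; linear_combination -hroot
    nlinarith
  clear_value p q
  clear_value f
  intro z hz hzβ
  have h1 : (β : ℂ) ^ 3 - a * (β : ℂ) ^ 2 - b * (β : ℂ) - 1 = 0 := by
    exact_mod_cast congrArg (fun x : ℝ => (x : ℂ)) hroot
  have hfac : (z - β) * (z ^ 2 + (p : ℂ) * z + (q : ℂ)) = 0 := by
    simp only [hp, hq]
    push_cast
    linear_combination hz - h1
  have hquad : z ^ 2 + (p : ℂ) * z + (q : ℂ) = 0 := by
    rcases mul_eq_zero.1 hfac with h | h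
    · exact absurd (sub_eq_zero.1 h) hzβ
    · exact h
  by_cases him : z.im = 0
  · -- z is real
    have hzre : z = (z.re : ℂ) := Complex.ext rfl (by simp [him])
    set x : ℝ := z.re with hx
    have hxeq : x ^ 2 + p * x + q = 0 := by
      have : ((x ^ 2 + p * x + q : ℝ) : ℂ) = 0 := by push_cast; rw [← hzre]; exact hquad
      exact_mod_cast this
    have habs : ‖z‖ = |x| := by rw [hzre, Complex.norm_real, Real.norm_eq_abs]
    rw [habs, abs_lt]
    constructor
    · by_contra h
      push_neg at h
      have h1' : x ≤ -1 := by linarith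
      have hprod : 0 ≤ (x + 1) * (x + q) := by
        nlinarith [mul_nonneg (show (0:ℝ) ≤ -(x + 1) by linarith)
          (show (0:ℝ) ≤ -(x + q) by nlinarith)]
      have hpos : 0 < x * (p - 1 - q) :=
        mul_pos_of_neg_of_neg (by linarith) (by linarith)
      have hid : x ^ 2 + p * x + q = (x + 1) * (x + q) + x * (p - 1 - q) := by ring
      linarith
    · by_contra h
      push_neg at h
      have hprod : 0 ≤ (x - 1) * (x - q) :=
        mul_nonneg (by linarith) (by linarith)
      have hpos : 0 < x * (1 + p + q) := mul_pos (by linarith) hQ1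
      have hid : x ^ 2 + p * x + q = (x - 1) * (x - q) + x * (1 + p + q) := by ring
      linarith
  · -- z is not real
    have hconj : (starRingEnd ℂ) z ^ 2 + (p : ℂ) * (starRingEnd ℂ) z + (q : ℂ) = 0 := by
      have := congrArg (starRingEnd ℂ) hquad
      simpa [map_add, map_mul, map_pow, Complex.conj_ofReal] using this
    have hne : z - (starRingEnd ℂ) z ≠ 0 := by
      rw [Complex.sub_conj]
      simp [Complex.ext_iff, him]
    have hsum : z + (starRingEnd ℂ) z + (p : ℂ) = 0 := by
      have hfac2 : (z - (starRingEnd ℂ) z) * (z + (starRingEnd ℂ) z + (p : ℂ)) = 0 := by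
        linear_combination hquad - hconj
      rcases mul_eq_zero.1 hfac2 with h | h
      · exact absurd h hne
      · exact h
    have hprod : z * (starRingEnd ℂ) z = (q : ℂ) := by
      linear_combination z * hsum - hquad
    have hnormSq : Complex.normSq z = q := by
      have := (Complex.mul_conj z).symm.trans hprod
      exact_mod_cast this
    have hsq : ‖z‖ ^ 2 = q := by rw [Complex.sq_norm, hnormSq]
    nlinarith [norm_nonneg z]
end

section
/- The polynomial x^3 - 3x^2 + 2x - 1 has exactly one real root β, with β > 1, and its two complex conjugate roots α, ᾱ satisfy |α| < 1. -/
/-- x³ - 3x² + 2x - 1 has exactly one real root β, with β > 1, and its two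
complex conjugate roots α, conj α satisfy |α| < 1. -/
theorem stmt_4 :
    ∃ β : ℝ, 1 < β ∧ β ^ 3 - 3 * β ^ 2 + 2 * β - 1 = 0 ∧
      (∀ x : ℝ, x ^ 3 - 3 * x ^ 2 + 2 * x - 1 = 0 → x = β) ∧
      ∃ α : ℂ, α.im ≠ 0 ∧ α ^ 3 - 3 * α ^ 2 + 2 * α - 1 = 0 ∧
        (starRingEnd ℂ α) ^ 3 - 3 * (starRingEnd ℂ α) ^ 2 + 2 * (starRingEnd ℂ α) - 1 = 0 ∧
        ‖α‖ < 1 ∧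
        ∀ z : ℂ, z ^ 3 - 3 * z ^ 2 + 2 * z - 1 = 0 →
          z = (β : ℂ) ∨ z = α ∨ z = starRingEnd ℂ α := by
  obtain ⟨β, hmem, hβ⟩ : ∃ β ∈ Set.Icc (2:ℝ) 3, β ^ 3 - 3 * β ^ 2 + 2 * β - 1 = 0 := by
    have hcont : ContinuousOn (fun x : ℝ => x ^ 3 - 3 * x ^ 2 + 2 * x - 1) (Set.Icc 2 3) :=
      (by continuity : Continuous fun x : ℝ => x ^ 3 - 3 * x ^ 2 + 2 * x - 1).continuousOn
    have h := intermediate_value_Icc (by norm_num : (2:ℝ) ≤ 3) hcont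
    have h0 : (0:ℝ) ∈ Set.Icc ((2:ℝ) ^ 3 - 3 * 2 ^ 2 + 2 * 2 - 1)
        ((3:ℝ) ^ 3 - 3 * 3 ^ 2 + 2 * 3 - 1) := by norm_num
    exact h h0
  obtain ⟨h2le, h3le⟩ := hmem
  have h2 : 2 < β := lt_of_le_of_ne h2le (by rintro rfl; norm_num at hβ)
  have h3 : β < 3 := lt_of_le_of_ne h3le (by rintro rfl; norm_num at hβ)
  set c : ℝ := β ^ 2 - 3 * β + 2 with hc3
  have hβc : β * c = 1 := by rw [hc3]; linear_combination hβ
  have hD : 0 < 4 * c - (3 - β) ^ 2 := by nlinarith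
  set s : ℝ := Real.sqrt (4 * c - (3 - β) ^ 2) with hs_def
  have hs : s ^ 2 = 4 * c - (3 - β) ^ 2 := Real.sq_sqrt hD.le
  have hs0 : 0 < s := Real.sqrt_pos.mpr hD
  set α : ℂ := ((3 - β) / 2 : ℝ) + ((s / 2 : ℝ) : ℂ) * Complex.I with hα_def
  have hconj : starRingEnd ℂ α = ((3 - β) / 2 : ℝ) - ((s / 2 : ℝ) : ℂ) * Complex.I := by
    rw [hα_def, map_add, map_mul, Complex.conj_ofReal, Complex.conj_ofReal, Complex.conj_I]
    ring
  -- casts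
  have hsC : ((s : ℂ)) ^ 2 = 4 * (c : ℂ) - (3 - (β : ℂ)) ^ 2 := by exact_mod_cast hs
  have hβcC : (β : ℂ) * (c : ℂ) = 1 := by exact_mod_cast hβc
  have hc3C : (c : ℂ) = (β : ℂ) ^ 2 - 3 * (β : ℂ) + 2 := by exact_mod_cast hc3
  have key : ∀ z : ℂ, z ^ 3 - 3 * z ^ 2 + 2 * z - 1
      = (z - (β : ℂ)) * ((z - α) * (z - starRingEnd ℂ α)) := by
    intro z
    rw [hconj, hα_def]
    push_cast
    linear_combination (-z) * hc3C + hβcC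
      + (z - (β:ℂ)) * ((s:ℂ) ^ 2 / 4) * Complex.I_sq - (z - (β:ℂ)) / 4 * hsC
  refine ⟨β, by linarith, hβ, ?_, α, ?_, ?_, ?_, ?_, ?_⟩
  · -- uniqueness of real root
    intro x hx
    have hfac : x ^ 3 - 3 * x ^ 2 + 2 * x - 1 = (x - β) * (x ^ 2 - (3 - β) * x + c) := by
      linear_combination (-x) * hc3 + hβc
    have hpos : 0 < x ^ 2 - (3 - β) * x + c := by nlinarith [sq_nonneg (x - (3 - β) / 2)]
    have : (x - β) * (x ^ 2 - (3 - β) * x + c) = 0 := by rw [← hfac]; exact hx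
    rcases mul_eq_zero.mp this with h | h
    · linarith [sub_eq_zero.mp h]
    · linarith
  · -- im ≠ 0
    rw [hα_def]
    simp [Complex.add_im]
    positivity
  · rw [key α]; ring
  · rw [key (starRingEnd ℂ α)]; ring
  · -- abs α < 1
    have habs : ‖α‖ ^ 2 = ((3 - β) / 2) ^ 2 + (s / 2) ^ 2 := by
      rw [Complex.sq_norm, hα_def]
      simp [Complex.normSq_apply]
      ring
    have hc1 : c < 1 := by nlinarith
    have h2' : ‖α‖ ^ 2 = c := by rw [habs]; nlinarith [hs]
    nlinarith [norm_nonneg α, h2']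
  · intro z hz
    have := key z
    rw [hz] at this
    rcases mul_eq_zero.mp this.symm with h | h
    · exact Or.inl (sub_eq_zero.mp h)
    · rcases mul_eq_zero.mp h with h' | h'
      · exact Or.inr (Or.inl (sub_eq_zero.mp h'))
      · exact Or.inr (Or.inr (sub_eq_zero.mp h'))
end

section
/- If α ∈ ℂ satisfies α^3 = a α^2 + b α + 1 and |α| < 1, then α + b α^2 + (a-1) α^3 = (b+2)α^4 + (a+b+1)α^5 + (a+b)·Σ_{i=6}^{∞} α^i, i.e., α + b α^2 + (a-1) α^3 = (b+2)α^4 + (a+b+1)α^5 + (a+b)α^6/(1-α). -/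
/-- The identity z₁ = z₂ of two α-representations. -/
theorem stmt_6 (a b : ℤ) (α : ℂ)
    (hroot : α ^ 3 = a * α ^ 2 + b * α + 1)
    (h0 : 0 < ‖α‖) (h1 : ‖α‖ < 1) :
    α + b * α ^ 2 + (a - 1) * α ^ 3 =
      (b + 2) * α ^ 4 + (a + b + 1) * α ^ 5 + (a + b) * α ^ 6 / (1 - α) ∧
    α + b * α ^ 2 + (a - 1) * α ^ 3 =
      (b + 2) * α ^ 4 + (a + b + 1) * α ^ 5 + (a + b) * ∑' i : ℕ, α ^ (i + 6) := by
  have hne : (1 : ℂ) - α ≠ 0 := by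
    intro h
    have : α = 1 := by linear_combination -h
    rw [this] at h1
    simp at h1
  have key : α + b * α ^ 2 + (a - 1) * α ^ 3 =
      (b + 2) * α ^ 4 + (a + b + 1) * α ^ 5 + (a + b) * α ^ 6 / (1 - α) := by
    field_simp
    ring_nf
    linear_combination (α ^ 3 + α ^ 2 - α) * hroot
  refine ⟨key, ?_⟩
  have hnorm : ‖α‖ < 1 := h1
  have hsum : ∑' i : ℕ, α ^ (i + 6) = α ^ 6 / (1 - α) := by
    have := tsum_geometric_of_norm_lt_one hnorm
    calc ∑' i : ℕ, α ^ (i + 6) = ∑' i : ℕ, α ^ 6 * α ^ i := by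
          congr 1; ext i; rw [pow_add]; ring
      _ = α ^ 6 * ∑' i : ℕ, α ^ i := tsum_mul_left
      _ = α ^ 6 / (1 - α) := by rw [this]; field_simp
  rw [hsum, mul_div_assoc] at *
  exact key
end

section
/- For every k ≥ l, the real number S̃_k = Σ_{i=l}^{k} (a_i - b_i) β^{i-k+2} satisfies |S̃_k| < β^3, where the digit sequences (a_i) and (b_i) are admissible (lexicographically bounded by (a-1)(a+b-1)(a+b)(a+b)⋯). -/
open Finset

def pdig (a b : ℤ) : ℕ → ℤ := fun t => if t = 0 then a - 1 else if t = 1 then a + b - 1 else a + b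

lemma T_id (a b : ℤ) (β : ℝ) (hβ : 1 < β) (hβroot : β ^ 3 = a * β ^ 2 + b * β + 1) :
    ∀ m : ℕ, ∑ t ∈ range (m + 2), (pdig a b t : ℝ) * (β⁻¹) ^ t
      = β - ((a : ℝ) + b) * (β⁻¹) ^ (m + 1) / (β - 1) := by
  have hβ0 : (0:ℝ) < β := by linarith
  have hβne : β ≠ 0 := ne_of_gt hβ0
  have hβ1 : β - 1 ≠ 0 := by intro h; nlinarith
  intro m
  induction m with
  | zero =>
      simp [pdig, sum_range_succ]
      field_simp
      ring_nf
      nlinarith [hβroot]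
  | succ m ih =>
      rw [sum_range_succ, ih, show pdig a b (m + 1 + 1) = a + b by simp [pdig]]
      have hkey : (β⁻¹) ^ (m + 1 + 1) * β = (β⁻¹) ^ (m + 1) := by
        rw [pow_succ, mul_assoc, inv_mul_cancel₀ hβne, mul_one]
      have h2 : (β - 1) * (β - 1)⁻¹ = 1 := mul_inv_cancel₀ hβ1
      push_cast
      linear_combination (((a:ℝ) + b) / (β - 1)) * hkey - (((a:ℝ) + b) * (β⁻¹) ^ (m + 1 + 1)) * h2

lemma T_lt (a b : ℤ) (hb1 : -a + 1 ≤ b) (β : ℝ) (hβ : 1 < β)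
    (hβroot : β ^ 3 = a * β ^ 2 + b * β + 1) :
    ∀ m : ℕ, ∑ t ∈ range (m + 1), (pdig a b t : ℝ) * (β⁻¹) ^ t < β := by
  have hβ0 : (0:ℝ) < β := by linarith
  have hγ0 : (0:ℝ) < β⁻¹ := by positivity
  have habz : (1:ℤ) ≤ a + b := by linarith
  have hab : (1:ℝ) ≤ (a:ℝ) + b := by exact_mod_cast habz
  intro m
  match m with
  | 0 =>
      have h := T_id a b β hβ hβroot 0
      rw [show (0:ℕ) + 2 = 1 + 1 from rfl, sum_range_succ] at h
      have hpos : 0 < ((a:ℝ) + b) * (β⁻¹) ^ (0 + 1) / (β - 1) :=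
        div_pos (mul_pos (by linarith) (by positivity)) (by linarith)
      have hp1 : (0:ℝ) ≤ (pdig a b 1 : ℝ) * (β⁻¹) ^ 1 := by
        have : (0:ℤ) ≤ pdig a b 1 := by simp [pdig]; omega
        have : (0:ℝ) ≤ (pdig a b 1 : ℝ) := by exact_mod_cast this
        positivity
      linarith
  | Nat.succ m' =>
      rw [show m' + 1 + 1 = m' + 2 from rfl, T_id a b β hβ hβroot m']
      have hpos : 0 < ((a:ℝ) + b) * (β⁻¹) ^ (m' + 1) / (β - 1) :=
        div_pos (mul_pos (by linarith) (by positivity)) (by linarith)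
      linarith

lemma key_lt (a b : ℤ) (hb1 : -a + 1 ≤ b) (hb2 : b ≤ -2) (β : ℝ) (hβ : 1 < β)
    (hβroot : β ^ 3 = a * β ^ 2 + b * β + 1) (l : ℤ) (W : ℤ → ℤ)
    (hadm : ∀ (j : ℤ) (k : ℕ), l ≤ j - k →
      ((∀ t : ℕ, t ≤ k → W (j - t) = pdig a b t) ∨
       (∃ t : ℕ, t ≤ k ∧ (∀ s : ℕ, s < t → W (j - s) = pdig a b s) ∧ W (j - t) < pdig a b t))) :
    ∀ n : ℕ, ∀ j : ℤ, l ≤ j - n →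
      ∑ t ∈ range (n + 1), (W (j - t) : ℝ) * (β⁻¹) ^ t < β := by
  have hβ0 : (0:ℝ) < β := by linarith
  have hβne : β ≠ 0 := ne_of_gt hβ0
  have hγ0 : (0:ℝ) < β⁻¹ := by positivity
  intro n
  induction n using Nat.strong_induction_on with
  | _ n IH =>
    intro j hj
    rcases hadm j n hj with hall | ⟨t₀, ht₀, hpre, hlt⟩
    · have heq : ∀ t ∈ range (n + 1), (W (j - t) : ℝ) * (β⁻¹) ^ t
          = (pdig a b t : ℝ) * (β⁻¹) ^ t := by
        intro t ht
        rw [hall t (by have := mem_range.mp ht; omega : t ≤ n)]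
      rw [Finset.sum_congr rfl heq]
      exact T_lt a b hb1 β hβ hβroot n
    · -- discrepancy at t₀
      have hγt0 : (0:ℝ) < (β⁻¹) ^ t₀ := by positivity
      -- split the sum
      have hsplit : ∑ t ∈ range (n + 1), (W (j - t) : ℝ) * (β⁻¹) ^ t
          = (∑ t ∈ range t₀, (W (j - t) : ℝ) * (β⁻¹) ^ t)
            + (W (j - t₀) : ℝ) * (β⁻¹) ^ t₀
            + ∑ t ∈ Ico (t₀ + 1) (n + 1), (W (j - t) : ℝ) * (β⁻¹) ^ t := by
        rw [range_eq_Ico, ← Finset.sum_Ico_consecutive _ (Nat.zero_le t₀)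
            (show t₀ ≤ n + 1 by omega), ← range_eq_Ico,
            Finset.sum_eq_sum_Ico_succ_bot (show t₀ < n + 1 by omega)]
        ring
      -- prefix equals pattern
      have hprefix : ∑ t ∈ range t₀, (W (j - t) : ℝ) * (β⁻¹) ^ t
          = ∑ t ∈ range t₀, (pdig a b t : ℝ) * (β⁻¹) ^ t := by
        refine Finset.sum_congr rfl fun t ht => ?_
        rw [hpre t (mem_range.mp ht)]
      -- middle term bound
      have hmid : (W (j - t₀) : ℝ) * (β⁻¹) ^ t₀ ≤ ((pdig a b t₀ : ℝ) - 1) * (β⁻¹) ^ t₀ := by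
        apply mul_le_mul_of_nonneg_right _ (le_of_lt hγt0)
        have : (W (j - t₀) : ℤ) ≤ pdig a b t₀ - 1 := by omega
        exact_mod_cast this
      -- tail bound
      have htail : ∑ t ∈ Ico (t₀ + 1) (n + 1), (W (j - t) : ℝ) * (β⁻¹) ^ t < (β⁻¹) ^ t₀ := by
        rcases eq_or_lt_of_le ht₀ with h | h
        · subst h
          simp only [Finset.Ico_self, Finset.sum_empty]
          positivity
        · rw [Finset.sum_Ico_eq_sum_range]
          have hne : n + 1 - (t₀ + 1) = (n - t₀ - 1) + 1 := by omega
          have hre : ∀ s ∈ range ((n - t₀ - 1) + 1),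
              (W (j - (t₀ + 1 + s)) : ℝ) * (β⁻¹) ^ (t₀ + 1 + s)
              = (β⁻¹) ^ (t₀ + 1) * ((W ((j - ((t₀ : ℤ) + 1)) - s) : ℝ) * (β⁻¹) ^ s) := by
            intro s _
            rw [show j - ((t₀ : ℤ) + 1 + (s : ℤ)) = (j - ((t₀ : ℤ) + 1)) - (s : ℤ) by ring,
                pow_add]
            push_cast
            ring
          rw [hne]
          calc ∑ s ∈ range ((n - t₀ - 1) + 1),
                (W (j - ↑(t₀ + 1 + s)) : ℝ) * (β⁻¹) ^ (t₀ + 1 + s)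
              = (β⁻¹) ^ (t₀ + 1) * ∑ s ∈ range ((n - t₀ - 1) + 1),
                  (W ((j - ((t₀ : ℤ) + 1)) - s) : ℝ) * (β⁻¹) ^ s := by
                rw [Finset.mul_sum]
                refine Finset.sum_congr rfl fun s hs => ?_
                have := hre s hs
                push_cast at this ⊢
                convert this using 3
            _ < (β⁻¹) ^ (t₀ + 1) * β := by
                apply mul_lt_mul_of_pos_left _ (by positivity)
                exact IH (n - t₀ - 1) (by omega) (j - ((t₀ : ℤ) + 1)) (by omega)
            _ = (β⁻¹) ^ t₀ := by
                rw [pow_succ, mul_assoc, inv_mul_cancel₀ hβne, mul_one]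
      -- combine
      have hT := T_lt a b hb1 β hβ hβroot t₀
      rw [sum_range_succ] at hT
      rw [hsplit, hprefix]
      linarith



/-- For admissible digit sequences, |S̃ₖ| = |∑_{i=l}^{k} (aᵢ-bᵢ) β^{i-k+2}| < β³. -/
theorem stmt_9 (a b : ℤ) (hb1 : -a + 1 ≤ b) (hb2 : b ≤ -2)
    (β : ℝ) (hβ : 1 < β) (hβroot : β ^ 3 = a * β ^ 2 + b * β + 1)
    (l : ℤ) (A B : ℤ → ℤ)
    (hA : ∀ i, 0 ≤ A i ∧ A i ≤ a - 1) (hB : ∀ i, 0 ≤ B i ∧ B i ≤ a - 1)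
    -- admissibility: every finite factor of the digit word (read with most
    -- significant digit first, i.e. decreasing indices) is lexicographically at
    -- most (a-1)(a+b-1)(a+b)(a+b)⋯
    (hAadm : ∀ (j : ℤ) (k : ℕ), l ≤ j - k →
      (let p : ℕ → ℤ := fun t => if t = 0 then a - 1 else if t = 1 then a + b - 1 else a + b
       (∀ t : ℕ, t ≤ k → A (j - t) = p t) ∨
       (∃ t : ℕ, t ≤ k ∧ (∀ s : ℕ, s < t → A (j - s) = p s) ∧ A (j - t) < p t)))
    (hBadm : ∀ (j : ℤ) (k : ℕ), l ≤ j - k →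
      (let p : ℕ → ℤ := fun t => if t = 0 then a - 1 else if t = 1 then a + b - 1 else a + b
       (∀ t : ℕ, t ≤ k → B (j - t) = p t) ∨
       (∃ t : ℕ, t ≤ k ∧ (∀ s : ℕ, s < t → B (j - s) = p s) ∧ B (j - t) < p t))) :
    ∀ k : ℤ, l ≤ k →
      |∑ i ∈ Finset.Icc l k, ((A i : ℝ) - B i) * β ^ (i - k + 2)| < β ^ 3 := by
  have hβ0 : (0:ℝ) < β := by linarith
  have hβne : β ≠ 0 := ne_of_gt hβ0
  intro k hk
  set n : ℕ := (k - l).toNat with hn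
  have hnk : (n : ℤ) = k - l := Int.toNat_of_nonneg (by omega)
  -- reindexing lemma
  have reindex : ∀ W : ℤ → ℤ, ∑ i ∈ Finset.Icc l k, (W i : ℝ) * β ^ (i - k + 2)
      = β ^ 2 * ∑ t ∈ range (n + 1), (W (k - t) : ℝ) * (β⁻¹) ^ t := by
    intro W
    have hmap : Finset.Icc l k
        = (range (n + 1)).map ⟨fun t : ℕ => k - (t : ℤ), fun s t h => by simp only at h; omega⟩ := by
      ext i
      simp only [Finset.mem_Icc, Finset.mem_map, Finset.mem_range,
        Function.Embedding.coeFn_mk, DFunLike.coe]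
      constructor
      · intro ⟨h1, h2⟩
        exact ⟨(k - i).toNat, by omega, by omega⟩
      · rintro ⟨t, ht, rfl⟩
        omega
    rw [hmap, Finset.sum_map, Finset.mul_sum]
    refine Finset.sum_congr rfl fun t _ => ?_
    dsimp only [DFunLike.coe]
    have hz : β ^ (k - (t : ℤ) - k + 2) = β ^ 2 * (β⁻¹) ^ t := by
      rw [show k - (t : ℤ) - k + 2 = 2 - (t : ℤ) by ring, zpow_sub₀ hβne,
        zpow_natCast, inv_pow, div_eq_mul_inv]
      norm_num [zpow_ofNat]
    rw [hz]; ring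
  -- bounds for each sum
  have hkeyA := key_lt a b hb1 hb2 β hβ hβroot l A (fun j k hjk => hAadm j k hjk)
      n k (by omega)
  have hkeyB := key_lt a b hb1 hb2 β hβ hβroot l B (fun j k hjk => hBadm j k hjk)
      n k (by omega)
  have hnonneg : ∀ W : ℤ → ℤ, (∀ i, 0 ≤ W i) →
      0 ≤ ∑ t ∈ range (n + 1), (W (k - t) : ℝ) * (β⁻¹) ^ t := by
    intro W hW
    refine Finset.sum_nonneg fun t _ => ?_
    have : (0:ℝ) ≤ (W (k - t) : ℝ) := by exact_mod_cast hW (k - t)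
    positivity
  have hA0 := hnonneg A (fun i => (hA i).1)
  have hB0 := hnonneg B (fun i => (hB i).1)
  have hsum : ∑ i ∈ Finset.Icc l k, ((A i : ℝ) - B i) * β ^ (i - k + 2)
      = β ^ 2 * ∑ t ∈ range (n + 1), (A (k - t) : ℝ) * (β⁻¹) ^ t
        - β ^ 2 * ∑ t ∈ range (n + 1), (B (k - t) : ℝ) * (β⁻¹) ^ t := by
    rw [← reindex A, ← reindex B, ← Finset.sum_sub_distrib]
    refine Finset.sum_congr rfl fun i _ => ?_
    ring
  rw [hsum, abs_lt]
  have hβ2 : (0:ℝ) < β ^ 2 := by positivity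
  constructor <;> nlinarith
end

section
/- Let α be the complex root of x^3 - 3x^2 + 2x - 1 with positive imaginary part. Then the point w = α + (α^3 + α^4 + α^5)/(1 - α^6) satisfies: w = 1 - α + 2α^2 + α^3 + Σ_{i=1}^{∞}(α^{6i+1} + α^{6i+2} + α^{6i+3}) and w = α^2 + Σ_{i=1}^{∞}(α^{6i-1} + α^{6i} + α^{6i+1}). -/
/-- The point w = α + (α³+α⁴+α⁵)/(1-α⁶) has the two series representations. -/
theorem stmt_14 (α : ℂ) (hroot : α ^ 3 = 3 * α ^ 2 - 2 * α + 1)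
    (him : 0 < α.im) (habs : ‖α‖ < 1) :
    α + (α ^ 3 + α ^ 4 + α ^ 5) / (1 - α ^ 6) =
      1 - α + 2 * α ^ 2 + α ^ 3 +
        ∑' i : ℕ, (α ^ (6 * (i + 1) + 1) + α ^ (6 * (i + 1) + 2) + α ^ (6 * (i + 1) + 3)) ∧
    α + (α ^ 3 + α ^ 4 + α ^ 5) / (1 - α ^ 6) =
      α ^ 2 + ∑' i : ℕ, (α ^ (6 * (i + 1) - 1) + α ^ (6 * (i + 1)) + α ^ (6 * (i + 1) + 1)) := by
  have h6 : ‖α ^ 6‖ < 1 := by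
    rw [norm_pow]
    exact pow_lt_one₀ (norm_nonneg _) habs (by norm_num)
  have hne : (1 : ℂ) - α ^ 6 ≠ 0 := by
    intro h
    have : α ^ 6 = 1 := by linear_combination -h
    rw [this] at h6
    simp at h6
  have hgeo : ∀ c : ℂ, ∑' i : ℕ, c * (α ^ 6) ^ i = c / (1 - α ^ 6) := by
    intro c
    rw [tsum_mul_left, tsum_geometric_of_norm_lt_one h6, div_eq_mul_inv]
  constructor
  · have h1 : ∑' i : ℕ, (α ^ (6 * (i + 1) + 1) + α ^ (6 * (i + 1) + 2) + α ^ (6 * (i + 1) + 3))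
        = (α ^ 7 + α ^ 8 + α ^ 9) / (1 - α ^ 6) := by
      rw [← hgeo (α ^ 7 + α ^ 8 + α ^ 9)]
      congr 1; funext i
      simp [pow_add, pow_mul, mul_add]
      ring
    rw [h1]
    field_simp
    ring_nf
    linear_combination (1 - α^2 - α^3 + α^5) * hroot
  · have h1 : ∑' i : ℕ, (α ^ (6 * (i + 1) - 1) + α ^ (6 * (i + 1)) + α ^ (6 * (i + 1) + 1))
        = (α ^ 5 + α ^ 6 + α ^ 7) / (1 - α ^ 6) := by
      rw [← hgeo (α ^ 5 + α ^ 6 + α ^ 7)]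
      congr 1; funext i
      have : 6 * (i + 1) - 1 = 6 * i + 5 := by omega
      rw [this]
      simp [pow_add, pow_mul, mul_add]
      ring
    rw [h1]
    field_simp
    ring_nf
    linear_combination (-α - α^2 + α^4 + α^5) * hroot
end

section
/- Let α be the complex root of x^3 - 3x^2 + 2x - 1 with positive imaginary part, and define f_{3+k}(z) = 2α^4 + Σ_{j=1}^{k-1} α^{4+j} + 3α^{5+k} - α^{6+k} + α^{4+k} z for k ≥ 2. Then f_{3+k}(z_0) = f_{3+(k+1)}(y_0), where z_0 = (α^3 + α^4 + α^5)/(1 - α^6) and y_0 = (α^4 + α^5 + α^6)/(1 - α^6). -/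
/-- f_{3+k}(z₀) = f_{3+(k+1)}(y₀) for the IFS maps
f_{3+k}(z) = 2α⁴ + ∑_{j=1}^{k-1} α^{4+j} + 3α^{5+k} - α^{6+k} + α^{4+k} z, k ≥ 2. -/
theorem stmt_16 (α : ℂ) (hroot : α ^ 3 = 3 * α ^ 2 - 2 * α + 1)
    (him : 0 < α.im) (habs : ‖α‖ < 1)
    (f : ℕ → ℂ → ℂ)
    (hf : ∀ k : ℕ, 2 ≤ k → ∀ z : ℂ,
      f (3 + k) z = 2 * α ^ 4 + (∑ j ∈ Finset.Icc 1 (k - 1), α ^ (4 + j)) +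
        3 * α ^ (5 + k) - α ^ (6 + k) + α ^ (4 + k) * z) :
    ∀ k : ℕ, 2 ≤ k →
      f (3 + k) ((α ^ 3 + α ^ 4 + α ^ 5) / (1 - α ^ 6)) =
      f (3 + (k + 1)) ((α ^ 4 + α ^ 5 + α ^ 6) / (1 - α ^ 6)) := by
  intro k hk
  obtain ⟨m, rfl⟩ : ∃ m, k = m + 2 := ⟨k - 2, by omega⟩
  rw [hf (m + 2) (by omega), hf (m + 2 + 1) (by omega)]
  have hsimp : (m + 2 + 1 - 1) = (m + 1) + 1 := by omega
  rw [hsimp, Finset.sum_Icc_succ_top (by omega : 1 ≤ m + 1 + 1)]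
  have hden : (1 : ℂ) - α ^ 6 ≠ 0 := by
    intro h
    have h1 : α ^ 6 = 1 := by linear_combination -h
    have : ‖α ^ 6‖ < 1 := by
      rw [norm_pow]
      exact pow_lt_one₀ (norm_nonneg α) habs (by norm_num)
    rw [h1] at this; simp at this
  have hm : (m + 2 - 1) = m + 1 := by omega
  rw [hm]
  field_simp
  ring_nf
  linear_combination (α ^ (m + 2) * (α ^ 4 - α ^ 5 - α ^ 6 + α ^ 8 + α ^ 9 - α ^ 10)) * hroot
end

section
/- If β is the Pisot root of x^3 - a x^2 - b x - 1 with a = 3, b = -2, then β/(β-1) is also a Pisot number (β is a 'special Pisot number'). -/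
open Polynomial

/-- If β is the Pisot root of x³ - 3x² + 2x - 1, then β/(β-1) is also a Pisot
number: it is greater than 1, it is a root of a monic integer polynomial of
positive degree all of whose other complex roots have modulus < 1. -/
theorem stmt_18 (β : ℝ) (hβ : 1 < β) (hroot : β ^ 3 = 3 * β ^ 2 - 2 * β + 1) :
    1 < β / (β - 1) ∧
    ∃ p : Polynomial ℤ, p.Monic ∧ 0 < p.degree ∧
      Polynomial.aeval (β / (β - 1)) p = 0 ∧
      ∀ z : ℂ, Polynomial.aeval z p = 0 → z ≠ ((β / (β - 1) : ℝ) : ℂ) →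
        ‖z‖ < 1 := by
  have hb0 : β - 1 ≠ 0 := by intro h; nlinarith
  set γ : ℝ := β / (β - 1) with hγ
  have hγone : 1 < γ := by
    rw [hγ, lt_div_iff₀ (by linarith)]; linarith
  have hcube : γ ^ 3 = 2 * γ ^ 2 - γ + 1 := by
    rw [hγ]
    field_simp
    ring_nf
    nlinarith [hroot]
  refine ⟨hγone, X ^ 3 - 2 * X ^ 2 + X - 1, ?_, ?_, ?_, ?_⟩
  · monicity!
  · have : (X ^ 3 - 2 * X ^ 2 + X - 1 : ℤ[X]).degree = 3 := by compute_degree!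
    rw [this]; norm_num
  · simp only [map_sub, map_add, map_mul, map_pow, aeval_X, map_ofNat, map_one]
    push_cast
    linarith [hcube]
  · intro z hz hne
    simp only [map_sub, map_add, map_mul, map_pow, aeval_X, map_ofNat, map_one] at hz
    -- γ bounds
    have h43 : 4 < 3 * γ := by nlinarith
    have h2 : γ < 2 := by nlinarith
    -- factor out (z - γ)
    have hquad : z ^ 2 + ((γ : ℂ) - 2) * z + ((γ : ℂ) - 1) ^ 2 = 0 := by
      have hfac : (z - (γ : ℂ)) * (z ^ 2 + ((γ : ℂ) - 2) * z + ((γ : ℂ) - 1) ^ 2) = 0 := by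
        have hc : (γ : ℂ) ^ 3 = 2 * (γ : ℂ) ^ 2 - (γ : ℂ) + 1 := by
          exact_mod_cast congrArg (Complex.ofReal ·) hcube
        linear_combination hz - hc
      rcases mul_eq_zero.mp hfac with h | h
      · exact absurd (by linear_combination h) hne
      · exact h
    set x := z.re
    set y := z.im
    have hre : x ^ 2 - y ^ 2 + (γ - 2) * x + (γ - 1) ^ 2 = 0 := by
      have := congrArg Complex.re hquad
      simpa [Complex.add_re, Complex.mul_re, Complex.sub_re, pow_two, Complex.ofReal_re,
        Complex.ofReal_im] using this
    have him : y * (2 * x + (γ - 2)) = 0 := by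
      have := congrArg Complex.im hquad
      simp [Complex.add_im, Complex.mul_im, Complex.sub_im, pow_two, Complex.ofReal_re,
        Complex.ofReal_im] at this
      linarith [this]
    have habs : ‖z‖ ^ 2 = x ^ 2 + y ^ 2 := by
      rw [Complex.sq_norm, Complex.normSq_apply]; ring
    rcases mul_eq_zero.mp him with hy | hx
    · -- y = 0 : contradiction, quadratic has no real root
      exfalso
      nlinarith [sq_nonneg (2 * x + (γ - 2)), hre, hy, h43, hγone]
    · -- 2x = 2 - γ : |z|² = (γ-1)² < 1
      have hsum : x ^ 2 + y ^ 2 = (γ - 1) ^ 2 := by nlinarith [hre, hx]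
      have : ‖z‖ ^ 2 < 1 := by rw [habs, hsum]; nlinarith
      nlinarith [norm_nonneg z, this]
end
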